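/- Let Φ : M_{d_A} → M_{d_B} and Ψ : M_{d_A} → M_{d_C} be complementary completely positive maps (arising from a common Stinespring operator L : ℂ^{d_A} → ℂ^{d_B} ⊗ ℂ^{d_C} via Φ(X) = Tr_C(LXL†) and Ψ(X) = Tr_B(LXL†)). If the Choi matrix J(Φ) has positive partial transpose, then rank(J(Ψ)) ≤ max{rank(Tr_A J(Ψ)), rank(Tr_C J(Ψ))}. -/

import Mathlib

open Matrix Kronecker BigOperators ComplexOrder

noncomputable section

/-- Partial trace over the first tensor factor. -/
def trFst {m p : Type*} [Fintype m] (X : Matrix (m × p) (m × p) ℂ) : Matrix p p ℂ :=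
  fun i j => ∑ a, X (a, i) (a, j)

/-- Partial trace over the second tensor factor. -/
def trSnd {m p : Type*} [Fintype p] (X : Matrix (m × p) (m × p) ℂ) : Matrix m m ℂ :=
  fun i j => ∑ b, X (i, b) (j, b)

/-- Partial transpose on the second tensor factor. -/
def ptSnd {m p : Type*} (X : Matrix (m × p) (m × p) ℂ) : Matrix (m × p) (m × p) ℂ :=
  fun q r => X (q.1, r.2) (r.1, q.2)

/-- A bipartite matrix is separable if it is a finite sum of Kronecker products of
positive semidefinite matrices (equivalently, lies in the convex hull of such products). -/
def Separable {m p : Type*} [Fintype m] [Fintype p] (X : Matrix (m × p) (m × p) ℂ) : Prop :=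
  ∃ (k : ℕ) (Y : Fin k → Matrix m m ℂ) (Z : Fin k → Matrix p p ℂ),
    (∀ i, (Y i).PosSemidef) ∧ (∀ i, (Z i).PosSemidef) ∧ X = ∑ i, (Y i) ⊗ₖ (Z i)

/-- The amplification `id_m ⊗ Φ` of a map `Φ`, acting blockwise. -/
def amp {dA dB : ℕ} {m : Type*}
    (Φ : Matrix (Fin dA) (Fin dA) ℂ →ₗ[ℂ] Matrix (Fin dB) (Fin dB) ℂ)
    (X : Matrix (m × Fin dA) (m × Fin dA) ℂ) : Matrix (m × Fin dB) (m × Fin dB) ℂ :=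
  fun q r => Φ (fun a a' => X (q.1, a) (r.1, a')) q.2 r.2

/-- The amplification `ϑ_m ⊗ Φ` of a map `Φ` (transpose on the first factor). -/
def ampT {dA dB : ℕ} {m : Type*}
    (Φ : Matrix (Fin dA) (Fin dA) ℂ →ₗ[ℂ] Matrix (Fin dB) (Fin dB) ℂ)
    (X : Matrix (m × Fin dA) (m × Fin dA) ℂ) : Matrix (m × Fin dB) (m × Fin dB) ℂ :=
  fun q r => Φ (fun a a' => X (r.1, a) (q.1, a')) q.2 r.2

/-- Complete positivity. -/
def IsCP {dA dB : ℕ} (Φ : Matrix (Fin dA) (Fin dA) ℂ →ₗ[ℂ] Matrix (Fin dB) (Fin dB) ℂ) : Prop :=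
  ∀ (n : ℕ) (X : Matrix (Fin n × Fin dA) (Fin n × Fin dA) ℂ),
    X.PosSemidef → (amp Φ X).PosSemidef

/-- Complete copositivity. -/
def IsCoCP {dA dB : ℕ} (Φ : Matrix (Fin dA) (Fin dA) ℂ →ₗ[ℂ] Matrix (Fin dB) (Fin dB) ℂ) : Prop :=
  ∀ (n : ℕ) (X : Matrix (Fin n × Fin dA) (Fin n × Fin dA) ℂ),
    X.PosSemidef → (ampT Φ X).PosSemidef

/-- A map is PPT if it is completely positive and completely copositive. -/
def IsPPT {dA dB : ℕ} (Φ : Matrix (Fin dA) (Fin dA) ℂ →ₗ[ℂ] Matrix (Fin dB) (Fin dB) ℂ) : Prop :=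
  IsCP Φ ∧ IsCoCP Φ

/-- Entanglement breaking maps. -/
def IsEB {dA dB : ℕ} (Φ : Matrix (Fin dA) (Fin dA) ℂ →ₗ[ℂ] Matrix (Fin dB) (Fin dB) ℂ) : Prop :=
  ∀ (n : ℕ) (X : Matrix (Fin n × Fin dA) (Fin n × Fin dA) ℂ),
    X.PosSemidef → Separable (amp Φ X)

/-- The Choi matrix of a linear map. -/
def Choi {dA dB : ℕ} (Φ : Matrix (Fin dA) (Fin dA) ℂ →ₗ[ℂ] Matrix (Fin dB) (Fin dB) ℂ) :
    Matrix (Fin dA × Fin dB) (Fin dA × Fin dB) ℂ :=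
  ∑ i, ∑ j, (Matrix.single i j (1 : ℂ)) ⊗ₖ Φ (Matrix.single i j (1 : ℂ))

set_option linter.unusedSectionVars false
set_option linter.unusedVariables false
set_option linter.unreachableTactic false
set_option linter.unusedTactic false

namespace Stmt6Aux

open Module Submodule

variable {α β : Type*} [Fintype α] [Fintype β] [DecidableEq α] [DecidableEq β]

/-- tensor product of two vectors -/
def tv (x : α → ℂ) (f : β → ℂ) : α × β → ℂ := fun q => x q.1 * f q.2

/-- the matrix `x ⊗ I` -/
def Ex (x : α → ℂ) : Matrix (α × β) β ℂ := Matrix.of fun q b => x q.1 * (if q.2 = b then 1 else 0)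

lemma Ex_mulVec (x : α → ℂ) (f : β → ℂ) : (Ex x : Matrix (α × β) β ℂ) *ᵥ f = tv x f := by
  funext q
  simp [Ex, tv, mulVec, dotProduct, mul_ite, ite_mul, mul_assoc]

lemma dot_expand (A : Matrix (α × β) (α × β) ℂ) (u v : α × β → ℂ) :
    star u ⬝ᵥ (A *ᵥ v) = ∑ q : (α × β) × (α × β), star (u q.1) * A q.1 q.2 * v q.2 := by
  rw [Fintype.sum_prod_type]
  simp [dotProduct, mulVec, Finset.mul_sum, mul_assoc]

/-- the index swap -/
def sw : ((α × β) × (α × β)) ≃ ((α × β) × (α × β)) where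
  toFun q := ((q.1.1, q.2.2), (q.2.1, q.1.2))
  invFun q := ((q.1.1, q.2.2), (q.2.1, q.1.2))
  left_inv q := rfl
  right_inv q := rfl

lemma keyfact {ρ : Matrix (α × β) (α × β) ℂ} (hσ : (ptSnd ρ).PosSemidef)
    {x : α → ℂ} {f : β → ℂ} (h : ρ *ᵥ tv x f = 0) (z : α → ℂ) (y : β → ℂ) :
    star (tv z f) ⬝ᵥ (ρ *ᵥ tv x y) = 0 := by
  have h1 : ptSnd ρ *ᵥ tv x (star f) = 0 := by
    rw [← hσ.dotProduct_mulVec_zero_iff]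
    have e1 : star (tv x (star f)) ⬝ᵥ (ptSnd ρ *ᵥ tv x (star f))
        = star (tv x f) ⬝ᵥ (ρ *ᵥ tv x f) := by
      rw [dot_expand, dot_expand]
      refine Fintype.sum_equiv sw _ _ ?_
      intro q
      simp only [sw, Equiv.coe_fn_mk, tv, ptSnd, Pi.star_apply, star_mul', star_star]
      ring
    rw [e1, h, dotProduct_zero]
  have e2 : star (tv z f) ⬝ᵥ (ρ *ᵥ tv x y)
      = ∑ p : α × β, (star (z p.1) * y p.2) * (ptSnd ρ *ᵥ tv x (star f)) p := by
    rw [dot_expand]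
    have e3 : ∀ p : α × β, (star (z p.1) * y p.2) * (ptSnd ρ *ᵥ tv x (star f)) p
        = ∑ q : α × β, (star (z p.1) * y p.2) * (ptSnd ρ p q * (x q.1 * star (f q.2))) := by
      intro p
      simp [mulVec, dotProduct, tv, Finset.mul_sum]
    simp_rw [e3]
    have e4 : (∑ p : α × β, ∑ q : α × β, star (z p.1) * y p.2 * (ptSnd ρ p q * (x q.1 * star (f q.2))))
        = ∑ r : (α × β) × (α × β), star (z r.1.1) * y r.1.2 * (ptSnd ρ r.1 r.2 * (x r.2.1 * star (f r.2.2))) :=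
      (Fintype.sum_prod_type (f := fun r : (α × β) × (α × β) => star (z r.1.1) * y r.1.2 * (ptSnd ρ r.1 r.2 * (x r.2.1 * star (f r.2.2))))).symm
    rw [e4]
    refine Fintype.sum_equiv sw _ _ ?_
    intro q
    simp only [sw, Equiv.coe_fn_mk, tv, ptSnd, Pi.star_apply, star_mul', star_star]
    ring
  rw [e2, h1]
  simp


lemma pencil {n m : Type*} [Fintype n] [Fintype m] [DecidableEq n]
    (P Q : Matrix n m ℂ) (hrank : ∀ t : ℂ, (P + t • Q).rank ≤ P.rank)
    {f : m → ℂ} (hf : P *ᵥ f = 0) : Q *ᵥ f ∈ LinearMap.range P.mulVecLin := by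
  by_contra hQf
  classical
  set r := P.rank with hr
  have hdimW : finrank ℂ (LinearMap.range P.mulVecLin) = r := rfl
  let bW : Basis (Fin r) ℂ (LinearMap.range P.mulVecLin) :=
    Module.finBasisOfFinrankEq ℂ _ hdimW
  have hu : ∀ i : Fin r, ∃ g : m → ℂ, P.mulVecLin g = (bW i : n → ℂ) := fun i => (bW i).2
  choose u hu using hu
  set g : Fin (r + 1) → (n → ℂ) := Fin.snoc (fun i => (bW i : n → ℂ)) (Q *ᵥ f) with hg
  have hspan : Submodule.span ℂ (Set.range fun i => (bW i : n → ℂ))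
      = LinearMap.range P.mulVecLin := by
    have h1 : (Set.range fun i => (bW i : n → ℂ))
        = (LinearMap.range P.mulVecLin).subtype '' (Set.range bW) := (Set.range_comp _ _)
    rw [h1, ← Submodule.map_span, bW.span_eq, Submodule.map_top, Submodule.range_subtype]
  have hgind : LinearIndependent ℂ g := by
    rw [hg, linearIndependent_fin_snoc]
    refine ⟨?_, ?_⟩
    · exact bW.linearIndependent.map' (LinearMap.range P.mulVecLin).subtype
        (Submodule.ker_subtype _)
    · rw [hspan]; exact hQf
  -- the projection π
  set W' : Submodule ℂ (n → ℂ) := Submodule.span ℂ (Set.range g) with hW'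
  let bW' : Basis (Fin (r + 1)) ℂ W' := Basis.span hgind
  obtain ⟨Co, hCo⟩ := Submodule.exists_isCompl W'
  set π : (n → ℂ) →ₗ[ℂ] (Fin (r + 1) → ℂ) :=
    (bW'.equivFun.toLinearMap).comp (W'.projectionOnto Co hCo) with hπ
  have hπmem : ∀ (w : n → ℂ) (hw : w ∈ W'), π w = bW'.equivFun ⟨w, hw⟩ := by
    intro w hw
    have := Submodule.linearProjOfIsCompl_apply_left hCo (⟨w, hw⟩ : W')
    simp only [hπ, LinearMap.comp_apply, LinearEquiv.coe_toLinearMap]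
    rw [this]
  have hgmem : ∀ i, g i ∈ W' := fun i => Submodule.subset_span (Set.mem_range_self i)
  have hπg : ∀ i, π (g i) = bW'.equivFun (bW' i) := by
    intro i
    rw [hπmem (g i) (hgmem i)]
    congr 1
    exact (Module.Basis.span_apply hgind i).symm
  have hindπg : LinearIndependent ℂ (fun i => π (g i)) := by
    have h2 : LinearIndependent ℂ (fun i => bW'.equivFun (bW' i)) :=
      bW'.linearIndependent.map' bW'.equivFun.toLinearMap bW'.equivFun.ker
    simpa only [hπg] using h2
  -- the polynomial matrix
  set Gm : Matrix (Fin (r+1)) (Fin (r+1)) (Polynomial ℂ) := Matrix.of fun i j =>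
    if hj : (j : ℕ) < r then
      Polynomial.C (π (P.mulVecLin (u ⟨j, hj⟩)) i) +
        Polynomial.X * Polynomial.C (π (Q *ᵥ u ⟨j, hj⟩) i)
    else Polynomial.C (π (Q *ᵥ f) i) with hGm
  have hGeval : ∀ t : ℂ, (Gm.map (Polynomial.eval t)).det = Polynomial.eval t Gm.det := by
    intro t
    rw [← Polynomial.coe_evalRingHom, RingHom.map_det]
    rfl
  have snoc_eq : ∀ (v : Fin r → (n → ℂ)) (x : n → ℂ) (j : Fin (r+1)) (hj : (j : ℕ) < r),
      Fin.snoc (α := fun _ => n → ℂ) v x j = v ⟨j, hj⟩ := by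
    intro v x j hj
    set k : Fin r := ⟨j, hj⟩ with hk
    have hj2 : j = Fin.castSucc k := Fin.ext rfl
    rw [hj2, Fin.snoc_castSucc]
  have snoc_eq_last : ∀ (v : Fin r → (n → ℂ)) (x : n → ℂ) (j : Fin (r+1)),
      ¬ (j : ℕ) < r → Fin.snoc (α := fun _ => n → ℂ) v x j = x := by
    intro v x j hj
    have hj2 : j = Fin.last r := Fin.ext (by have := j.isLt; simp [Fin.last]; omega)
    rw [hj2, Fin.snoc_last]
  have hgj : ∀ (j : Fin (r+1)) (hj : (j : ℕ) < r), g j = (bW ⟨j, hj⟩ : n → ℂ) := by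
    intro j hj
    rw [hg]; exact snoc_eq _ _ j hj
  have hglast : ∀ (j : Fin (r+1)), ¬ (j : ℕ) < r → g j = Q *ᵥ f := by
    intro j hj
    rw [hg]; exact snoc_eq_last _ _ j hj
  have hG0 : Gm.map (Polynomial.eval 0) = Matrix.of fun i j => π (g j) i := by
    funext i j
    by_cases hj : (j : ℕ) < r
    · simp only [hGm, Matrix.map_apply, Matrix.of_apply, dif_pos hj, Polynomial.eval_add,
        Polynomial.eval_C, Polynomial.eval_mul, Polynomial.eval_X, zero_mul, add_zero]
      rw [hu, hgj j hj]
    · simp only [hGm, Matrix.map_apply, Matrix.of_apply, dif_neg hj, Polynomial.eval_C]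
      rw [hglast j hj]
  have hdet0 : Gm.det.eval 0 ≠ 0 := by
    rw [← hGeval 0, hG0]
    have hunit : IsUnit (Matrix.of fun i j => π (g j) i) := by
      rw [← Matrix.linearIndependent_cols_iff_isUnit]
      exact hindπg
    exact ((Matrix.isUnit_iff_isUnit_det _).mp hunit).ne_zero
  have hE : Gm.det ≠ 0 := fun h => hdet0 (by rw [h, Polynomial.eval_zero])
  have hfin : ({(0:ℂ)} ∪ {t | Gm.det.IsRoot t}).Finite :=
    (Set.finite_singleton 0).union (Polynomial.finite_setOf_isRoot hE)
  obtain ⟨t₀, ht₀⟩ := hfin.infinite_compl.nonempty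
  rw [Set.mem_compl_iff, Set.mem_union, not_or] at ht₀
  have ht0ne : t₀ ≠ 0 := fun h => ht₀.1 (by simp [h])
  have hroot : Gm.det.eval t₀ ≠ 0 := ht₀.2
  -- columns at t₀
  set h : Fin (r + 1) → (n → ℂ) := Fin.snoc (fun i => (P + t₀ • Q) *ᵥ u i) (Q *ᵥ f) with hh
  have hGt : Gm.map (Polynomial.eval t₀) = Matrix.of fun i j => π (h j) i := by
    funext i j
    by_cases hj : (j : ℕ) < r
    · simp only [hGm, Matrix.map_apply, Matrix.of_apply, dif_pos hj, Polynomial.eval_add,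
        Polynomial.eval_C, Polynomial.eval_mul, Polynomial.eval_X]
      rw [hh, snoc_eq _ _ j hj, Matrix.add_mulVec, Matrix.smul_mulVec, map_add, _root_.map_smul]
      simp [Matrix.mulVecLin_apply, mul_comm]
    · simp only [hGm, Matrix.map_apply, Matrix.of_apply, dif_neg hj, Polynomial.eval_C]
      rw [hh, snoc_eq_last _ _ j hj]
  have hcols : LinearIndependent ℂ (fun j => π (h j)) := by
    have hunit : IsUnit (Gm.map (Polynomial.eval t₀)) := by
      apply (Matrix.isUnit_iff_isUnit_det _).mpr
      rw [hGeval]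
      exact isUnit_iff_ne_zero.mpr hroot
    have := Matrix.linearIndependent_cols_iff_isUnit.mpr hunit
    rw [hGt] at this
    exact this
  have hhind : LinearIndependent ℂ h := LinearIndependent.of_comp π hcols
  have hmem : ∀ j, h j ∈ LinearMap.range (P + t₀ • Q).mulVecLin := by
    intro j
    by_cases hj : (j : ℕ) < r
    · rw [hh, snoc_eq _ _ j hj]
      exact ⟨u ⟨j, hj⟩, rfl⟩
    · rw [hh, snoc_eq_last _ _ j hj]
      have hQff : (P + t₀ • Q) *ᵥ f = t₀ • (Q *ᵥ f) := by
        rw [Matrix.add_mulVec, hf, Matrix.smul_mulVec, zero_add]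
      have : Q *ᵥ f = t₀⁻¹ • ((P + t₀ • Q) *ᵥ f) := by
        rw [hQff, smul_smul, inv_mul_cancel₀ ht0ne, one_smul]
      rw [this]
      exact Submodule.smul_mem _ _ ⟨f, rfl⟩
  have hle : Submodule.span ℂ (Set.range h) ≤ LinearMap.range (P + t₀ • Q).mulVecLin :=
    Submodule.span_le.mpr (Set.range_subset_iff.mpr hmem)
  have hcontra : r + 1 ≤ (P + t₀ • Q).rank := by
    calc r + 1 = Fintype.card (Fin (r + 1)) := (Fintype.card_fin _).symm
      _ = finrank ℂ (Submodule.span ℂ (Set.range h)) := (finrank_span_eq_card hhind).symm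
      _ ≤ finrank ℂ (LinearMap.range (P + t₀ • Q).mulVecLin) := Submodule.finrank_mono hle
      _ = (P + t₀ • Q).rank := rfl
  have := hrank t₀
  omega


lemma key {ρ : Matrix (α × β) (α × β) ℂ} (hρ : ρ.PosSemidef)
    (hσ : (ptSnd ρ).PosSemidef) : (trFst ρ).rank ≤ ρ.rank := by
  classical
  have hxg : ∀ (y : α → ℂ) (v : β → ℂ), (ρ * Ex y) *ᵥ v = ρ *ᵥ tv y v := by
    intro y v
    have := Matrix.mulVec_mulVec v ρ (Ex y)
    rw [Ex_mulVec] at this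
    exact this.symm
  obtain ⟨x₀, hx₀⟩ : ∃ x₀ : α → ℂ, ∀ x : α → ℂ, (ρ * Ex x).rank ≤ (ρ * Ex x₀).rank := by
    have hbdd : BddAbove (Set.range fun x : α → ℂ => (ρ * Ex x).rank) := by
      refine ⟨Fintype.card β, ?_⟩
      rintro k ⟨x, rfl⟩
      exact Matrix.rank_le_card_width _
    have hne : (Set.range fun x : α → ℂ => (ρ * Ex x).rank).Nonempty := ⟨_, ⟨0, rfl⟩⟩
    obtain ⟨x₀, hx₀⟩ := Nat.sSup_mem hne hbdd
    refine ⟨x₀, fun x => ?_⟩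
    calc (ρ * Ex x).rank ≤ sSup (Set.range fun x : α → ℂ => (ρ * Ex x).rank) :=
          le_csSup hbdd ⟨x, rfl⟩
      _ = (ρ * Ex x₀).rank := hx₀.symm
  have main : ∀ (g : β → ℂ), (ρ * Ex x₀) *ᵥ g = 0 → ∀ x, (ρ * Ex x) *ᵥ g = 0 := by
    intro g hg x
    have hlin : ∀ t : ℂ, ρ * Ex x₀ + t • (ρ * Ex x) = ρ * Ex (x₀ + t • x) := by
      intro t
      have hE : Ex (β := β) (x₀ + t • x) = Ex x₀ + t • Ex x := by
        funext q b
        simp only [Ex, Matrix.of_apply, Matrix.add_apply, Matrix.smul_apply, Pi.add_apply,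
          Pi.smul_apply, smul_eq_mul]
        by_cases h : q.2 = b <;> simp [h] <;> ring
      rw [hE]; exact ((Matrix.mul_add ρ (Ex x₀) (t • Ex x)).trans (congrArg (ρ * Ex x₀ + ·) (Matrix.mul_smul ρ t (Ex x)))).symm
    have hrank : ∀ t : ℂ, (ρ * Ex x₀ + t • (ρ * Ex x)).rank ≤ (ρ * Ex x₀).rank := by
      intro t; rw [hlin t]; exact hx₀ _
    obtain ⟨w, hw⟩ := pencil (ρ * Ex x₀) (ρ * Ex x) hrank hg
    have h0 : ρ *ᵥ tv x₀ g = 0 := by rw [← hxg]; exact hg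
    have hzero : star (tv x g) ⬝ᵥ (ρ *ᵥ tv x g) = 0 := by
      have h1 : ρ *ᵥ tv x g = ρ *ᵥ tv x₀ w := by
        rw [← hxg x g, ← hxg x₀ w]
        exact hw.symm
      rw [h1]
      exact keyfact hσ h0 x w
    rw [hxg]
    exact (hρ.dotProduct_mulVec_zero_iff _).mp hzero
  have hker : LinearMap.ker (ρ * Ex x₀).mulVecLin ≤ LinearMap.ker (trFst ρ).mulVecLin := by
    intro g hg
    simp only [LinearMap.mem_ker, Matrix.mulVecLin_apply] at *
    have hvec : ∀ a : α, ρ *ᵥ tv (Pi.single a (1:ℂ)) g = 0 := by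
      intro a; rw [← hxg]; exact main g hg (Pi.single a 1)
    funext b
    have e0 : ∀ a, (ρ *ᵥ tv (Pi.single a (1:ℂ)) g) (a, b) = ∑ b', ρ (a,b) (a,b') * g b' := by
      intro a
      have e2 : (ρ *ᵥ tv (Pi.single a (1:ℂ)) g) (a,b)
          = ∑ j, ∑ b', ρ (a,b) (j,b') * ((Pi.single a (1:ℂ) : α → ℂ) j * g b') := by
        simp [mulVec, dotProduct, tv, Fintype.sum_prod_type]
      rw [e2, Finset.sum_eq_single a]
      · simp
      · intro j _ hja
        simp [Pi.single_apply, hja]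
      · intro h
        simp at h
    have e1 : (trFst ρ *ᵥ g) b = ∑ a, ∑ b', ρ (a,b) (a,b') * g b' := by
      simp only [mulVec, dotProduct, trFst, Finset.sum_mul]
      exact Finset.sum_comm
    rw [e1, Finset.sum_congr rfl fun a _ => (e0 a).symm]
    simp [hvec]
  have hcount1 : (trFst ρ).rank + finrank ℂ (LinearMap.ker (trFst ρ).mulVecLin)
      = Fintype.card β := by
    have h := LinearMap.finrank_range_add_finrank_ker (trFst ρ).mulVecLin
    rwa [Module.finrank_fintype_fun_eq_card] at h
  have hcount2 : (ρ * Ex x₀).rank + finrank ℂ (LinearMap.ker (ρ * Ex x₀).mulVecLin)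
      = Fintype.card β := by
    have h := LinearMap.finrank_range_add_finrank_ker (ρ * Ex x₀).mulVecLin
    rwa [Module.finrank_fintype_fun_eq_card] at h
  have hmono := Submodule.finrank_mono hker
  have hfin : (trFst ρ).rank ≤ (ρ * Ex x₀).rank := by omega
  exact hfin.trans (Matrix.rank_mul_le_left _ _)


lemma choi_apply {d e : ℕ} (Θ : Matrix (Fin d) (Fin d) ℂ →ₗ[ℂ] Matrix (Fin e) (Fin e) ℂ)
    (i j : Fin d) (b b' : Fin e) : Choi Θ (i, b) (j, b') = Θ (Matrix.single i j 1) b b' := by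
  simp [Choi, Matrix.sum_apply, Matrix.kroneckerMap_apply, Matrix.single, Matrix.of_apply,
    ite_and, Finset.sum_ite_eq, mul_ite, ite_mul, zero_mul, mul_zero, mul_one, one_mul]

lemma sandwich {dA dB dC : ℕ} (L : Matrix (Fin dB × Fin dC) (Fin dA) ℂ) (i j : Fin dA)
    (p q : Fin dB × Fin dC) :
    (L * Matrix.single i j (1:ℂ) * Lᴴ) p q = L p i * star (L q j) := by
  simp [Matrix.mul_apply, Matrix.single, Matrix.conjTranspose_apply, ite_and,
    Finset.sum_ite_eq, mul_ite, ite_mul, zero_mul, mul_zero, mul_one, one_mul]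


def Mmat {dA dB dC : ℕ} (L : Matrix (Fin dB × Fin dC) (Fin dA) ℂ) :
    Matrix (Fin dA × Fin dC) (Fin dB) ℂ := Matrix.of fun p b => L (b, p.2) p.1

def Nmat {dA dB dC : ℕ} (L : Matrix (Fin dB × Fin dC) (Fin dA) ℂ) :
    Matrix (Fin dA × Fin dB) (Fin dC) ℂ := Matrix.of fun p c => L (p.2, c) p.1

@[simp] lemma Mmat_apply {dA dB dC : ℕ} (L : Matrix (Fin dB × Fin dC) (Fin dA) ℂ) (p b) :
    Mmat L p b = L (b, p.2) p.1 := rfl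

@[simp] lemma Nmat_apply {dA dB dC : ℕ} (L : Matrix (Fin dB × Fin dC) (Fin dA) ℂ) (p c) :
    Nmat L p c = L (p.2, c) p.1 := rfl

end Stmt6Aux

open Stmt6Aux in
theorem stmt6 {dA dB dC : ℕ} (L : Matrix (Fin dB × Fin dC) (Fin dA) ℂ)
    (Φ : Matrix (Fin dA) (Fin dA) ℂ →ₗ[ℂ] Matrix (Fin dB) (Fin dB) ℂ)
    (Ψ : Matrix (Fin dA) (Fin dA) ℂ →ₗ[ℂ] Matrix (Fin dC) (Fin dC) ℂ)
    (hΦ : ∀ X, Φ X = trSnd (L * X * Lᴴ))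
    (hΨ : ∀ X, Ψ X = trFst (L * X * Lᴴ))
    (hPPT : (ptSnd (Choi Φ)).PosSemidef) :
    (Choi Ψ).rank ≤ max (trFst (Choi Ψ)).rank (trSnd (Choi Ψ)).rank := by
  classical
  have hΨM : Choi Ψ = Mmat L * (Mmat L)ᴴ := by
    ext ⟨i, c⟩ ⟨j, c'⟩
    rw [Stmt6Aux.choi_apply, hΨ]
    have e0 : trFst (L * Matrix.single i j (1:ℂ) * Lᴴ) c c'
        = ∑ b, L (b, c) i * star (L (b, c') j) := by
      simp only [trFst, Stmt6Aux.sandwich]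
    rw [e0]
    simp [Matrix.mul_apply, Matrix.conjTranspose_apply]
  have hΦN : Choi Φ = Nmat L * (Nmat L)ᴴ := by
    ext ⟨i, b⟩ ⟨j, b'⟩
    rw [Stmt6Aux.choi_apply, hΦ]
    have e0 : trSnd (L * Matrix.single i j (1:ℂ) * Lᴴ) b b'
        = ∑ c, L (b, c) i * star (L (b', c) j) := by
      simp only [trSnd, Stmt6Aux.sandwich]
    rw [e0]
    simp [Matrix.mul_apply, Matrix.conjTranspose_apply]
  have hTrΦ : trFst (Choi Φ) = ((Mmat L).map (starRingEnd ℂ))ᴴ * ((Mmat L).map (starRingEnd ℂ)) := by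
    ext b b'
    have e1 : ∀ i : Fin dA, Choi Φ (i, b) (i, b') = ∑ c, L (b, c) i * star (L (b', c) i) := by
      intro i
      rw [Stmt6Aux.choi_apply, hΦ]
      simp only [trSnd, Stmt6Aux.sandwich]
    have eL : trFst (Choi Φ) b b' = ∑ i, ∑ c, L (b, c) i * star (L (b', c) i) := by
      simp only [trFst]
      exact Finset.sum_congr rfl fun i _ => e1 i
    have eP : (∑ i : Fin dA, ∑ c : Fin dC, L (b, c) i * star (L (b', c) i))
        = ∑ p : Fin dA × Fin dC, L (b, p.2) p.1 * star (L (b', p.2) p.1) :=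
      (Fintype.sum_prod_type (f := fun p : Fin dA × Fin dC =>
        L (b, p.2) p.1 * star (L (b', p.2) p.1))).symm
    have eR : (((Mmat L).map (starRingEnd ℂ))ᴴ * ((Mmat L).map (starRingEnd ℂ))) b b'
        = ∑ p : Fin dA × Fin dC, L (b, p.2) p.1 * star (L (b', p.2) p.1) := by
      simp only [Matrix.mul_apply, Matrix.conjTranspose_apply, Matrix.map_apply, Mmat_apply,
        starRingEnd_apply, star_star]
    rw [eL, eP, eR]
  have hTrΨ : trFst (Choi Ψ) = ((Nmat L).map (starRingEnd ℂ))ᴴ * ((Nmat L).map (starRingEnd ℂ)) := by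
    ext c c'
    have e1 : ∀ i : Fin dA, Choi Ψ (i, c) (i, c') = ∑ b, L (b, c) i * star (L (b, c') i) := by
      intro i
      rw [Stmt6Aux.choi_apply, hΨ]
      simp only [trFst, Stmt6Aux.sandwich]
    have eL : trFst (Choi Ψ) c c' = ∑ i, ∑ b, L (b, c) i * star (L (b, c') i) := by
      simp only [trFst]
      exact Finset.sum_congr rfl fun i _ => e1 i
    have eP : (∑ i : Fin dA, ∑ b : Fin dB, L (b, c) i * star (L (b, c') i))
        = ∑ p : Fin dA × Fin dB, L (p.2, c) p.1 * star (L (p.2, c') p.1) :=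
      (Fintype.sum_prod_type (f := fun p : Fin dA × Fin dB =>
        L (p.2, c) p.1 * star (L (p.2, c') p.1))).symm
    have eR : (((Nmat L).map (starRingEnd ℂ))ᴴ * ((Nmat L).map (starRingEnd ℂ))) c c'
        = ∑ p : Fin dA × Fin dB, L (p.2, c) p.1 * star (L (p.2, c') p.1) := by
      simp only [Matrix.mul_apply, Matrix.conjTranspose_apply, Matrix.map_apply, Nmat_apply,
        starRingEnd_apply, star_star]
    rw [eL, eP, eR]
  have rM : ((Mmat L).map (starRingEnd ℂ)).rank = (Mmat L).rank := by
    have hMc : (Mmat L).map (starRingEnd ℂ) = ((Mmat L)ᴴ)ᵀ := rfl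
    rw [hMc, Matrix.rank_transpose, Matrix.rank_conjTranspose]
  have rN : ((Nmat L).map (starRingEnd ℂ)).rank = (Nmat L).rank := by
    have hNc : (Nmat L).map (starRingEnd ℂ) = ((Nmat L)ᴴ)ᵀ := rfl
    rw [hNc, Matrix.rank_transpose, Matrix.rank_conjTranspose]
  calc (Choi Ψ).rank = (Mmat L).rank := by rw [hΨM, Matrix.rank_self_mul_conjTranspose]
    _ = (trFst (Choi Φ)).rank := by rw [hTrΦ, Matrix.rank_conjTranspose_mul_self, rM]
    _ ≤ (Choi Φ).rank := Stmt6Aux.key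
        (by rw [hΦN]; exact posSemidef_self_mul_conjTranspose (Nmat L)) hPPT
    _ = (Nmat L).rank := by rw [hΦN, Matrix.rank_self_mul_conjTranspose]
    _ = (trFst (Choi Ψ)).rank := by rw [hTrΨ, Matrix.rank_conjTranspose_mul_self, rN]
    _ ≤ max (trFst (Choi Ψ)).rank (trSnd (Choi Ψ)).rank := le_max_left _ _
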